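/- arXiv:1605.01105 — 3 statements merged into one kernel-verified Lean document; each statement's English description precedes it below -/
import Mathlib

section
/- Let C_0 be an [n,t] code over F_q with generator matrix G_0 = [Ĝ; B] where Ĝ (s×n) generates an [n,s] subcode Ĉ satisfying: for every S ⊆ [n] with |S| = k (s ≤ k ≤ t), rank(G_0|_S) = k implies rank(Ĝ|_S) = s. Let Q = q^{t-s}, let α_1,...,α_{t-s} be a basis of F_Q over F_q, and define β_1,...,β_n by [β_1 ... β_n] = [α_1 ... α_{t-s}]B. Let C be the [n,k] code over F_Q generated by the matrix stacking Ĝ on top of the (k-s)×n Moore-type matrix with rows (β_1^{q^{i-1}}, ..., β_n^{q^{i-1}}), i = 1,...,k-s. Then C is a maximally recoverable subcode of C_0^{(Q)} (the code over F_Q generated by G_0), and Ĉ^{(Q)} ⊆ C. -/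
open Matrix

section Defs
variable {F : Type*} [Field F]

/-- Rank of the submatrix of `G` consisting of the columns indexed by `S`. -/
noncomputable def colRank {m α : Type*} [Fintype α] (G : Matrix m α F) (S : Finset α) : ℕ :=
  (G.submatrix id (fun j : S => (j : α))).rank

/-- The row space of a matrix. -/
def rowSpan {m α : Type*} (G : Matrix m α F) : Submodule F (α → F) :=
  Submodule.span F (Set.range fun i => G i)

/-- Rank of the restriction (puncturing) of a code `C` to the coordinates in `S`. -/
noncomputable def restrRank {α : Type*} (C : Submodule F (α → F)) (S : Finset α) : ℕ :=
  Module.finrank F (C.map (LinearMap.funLeft F F (fun j : S => (j : α))))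

/-- Shortening of a code on coordinates `α ⊕ β` to the coordinates `α`. -/
noncomputable def shortenSum {α β : Type*} (D : Submodule F ((α ⊕ β) → F)) :
    Submodule F (α → F) :=
  Submodule.map (LinearMap.funLeft F F Sum.inl)
    (D ⊓ (⨅ j : β, LinearMap.ker
      (LinearMap.proj (R := F) (Sum.inr j) : ((α ⊕ β) → F) →ₗ[F] F)))

/-- A valid (zero-error, worst case) scheme for the point-to-point function-update problem. -/
def IsValidScheme [DecidableEq F] {n m ℓ : ℕ} (A : Matrix (Fin m) (Fin n) F)
    (H : Matrix (Fin ℓ) (Fin n) F) (ε : ℕ)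
    (D : (Fin ℓ → F) → (Fin m → F) → (Fin m → F)) : Prop :=
  ∀ X E : Fin n → F, hammingNorm E ≤ ε →
    D (H.mulVec (X + E)) (A.mulVec X) = A.mulVec (X + E)

end Defs
set_option linter.unusedSectionVars false
set_option maxHeartbeats 1600000

section Helpers
variable {F L : Type*} [Field F] [Fintype F] [Field L] [Algebra F L]

open Polynomial

/-- If an `F`-combination of basis elements with `algebraMap`-coefficients vanishes,
the coefficients vanish. -/
lemma basis_mul_eq_zero {ι : Type*} [Fintype ι] (b : Module.Basis ι F L) (x : ι → F)
    (h : ∑ i, b i * algebraMap F L (x i) = 0) : x = 0 := by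
  have h' : ∑ i, x i • b i = 0 := by
    rw [← h]; exact Finset.sum_congr rfl fun i _ => by
      rw [Algebra.smul_def, mul_comm]
  funext i
  exact (Fintype.linearIndependent_iff.mp b.linearIndependent x h') i

/-- rank-nullity for matrices. -/
lemma matrix_rank_add_ker {K : Type*} [Field K] {m α : Type*} [Fintype α] [Fintype m]
    (M : Matrix m α K) :
    M.rank + Module.finrank K (LinearMap.ker M.mulVecLin) = Fintype.card α := by
  rw [Matrix.rank, LinearMap.finrank_range_add_finrank_ker,
    Module.finrank_fintype_fun_eq_card]

lemma mulVec_eq_zero_of_rank_card {K : Type*} [Field K] {m α : Type*} [Fintype α] [Fintype m]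
    (M : Matrix m α K) (h : M.rank = Fintype.card α) {v : α → K} (hv : M.mulVec v = 0) :
    v = 0 := by
  have h2 := matrix_rank_add_ker M
  rw [h] at h2
  have h3 : Module.finrank K (LinearMap.ker M.mulVecLin) = 0 := by omega
  have h4 : LinearMap.ker M.mulVecLin = ⊥ := Submodule.finrank_eq_zero.mp h3
  have : v ∈ LinearMap.ker M.mulVecLin := by
    simpa [Matrix.mulVecLin_apply] using hv
  simpa [h4] using this

lemma rank_eq_card_of_ker {K : Type*} [Field K] {m α : Type*} [Fintype α] [Fintype m]
    (M : Matrix m α K) (h : ∀ v, M.mulVec v = 0 → v = 0) : M.rank = Fintype.card α := by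
  have h2 := matrix_rank_add_ker M
  have h4 : LinearMap.ker M.mulVecLin = ⊥ := by
    rw [LinearMap.ker_eq_bot']
    intro v hv
    exact h v (by simpa [Matrix.mulVecLin_apply] using hv)
  rw [h4, finrank_bot] at h2
  omega


/-- F-linearly independent tuples of vectors over F stay independent over L. -/
lemma linIndep_map {ι α κ : Type*} [Fintype ι] [Fintype α] [Fintype κ]
    (b : Module.Basis κ F L) (v : ι → α → F) (hv : LinearIndependent F v) :
    LinearIndependent L (fun i => (algebraMap F L) ∘ v i) := by
  rw [Fintype.linearIndependent_iff]
  intro g hg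
  have key : ∀ r, (fun i => b.repr (g i) r) = 0 := by
    intro r
    have hco : ∀ j, (fun r => ∑ i, b.repr (g i) r * v i j) = 0 := by
      intro j
      apply basis_mul_eq_zero b
      have := congrFun hg j
      simp only [Finset.sum_apply, Pi.smul_apply, Function.comp_apply, Pi.zero_apply,
        smul_eq_mul] at this
      calc ∑ r, b r * algebraMap F L (∑ i, b.repr (g i) r * v i j)
          = ∑ r, ∑ i, (b.repr (g i) r • b r) * algebraMap F L (v i j) := by
            refine Finset.sum_congr rfl fun r _ => ?_
            rw [map_sum, Finset.mul_sum]
            refine Finset.sum_congr rfl fun i _ => ?_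
            rw [Algebra.smul_def, _root_.map_mul]; ring
        _ = ∑ i, (∑ r, b.repr (g i) r • b r) * algebraMap F L (v i j) := by
            rw [Finset.sum_comm]; simp only [Finset.sum_mul]
        _ = ∑ i, g i * algebraMap F L (v i j) := by
            refine Finset.sum_congr rfl fun i _ => ?_
            congr 1
            exact b.sum_repr (g i)
        _ = 0 := this
    have := Fintype.linearIndependent_iff.mp hv (fun i => b.repr (g i) r)
    funext i
    refine this ?_ i
    funext j
    simpa [Finset.sum_apply] using congrFun (hco j) r
  intro i
  have : b.repr (g i) = 0 := by
    ext r
    exact congrFun (key r) i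
  have := congrArg b.repr.symm this
  simpa using this


/-- Frobenius-type identity: pull a `q`-power inside a sum with `F`-rational coefficients. -/
lemma frob_sum_pow {q : ℕ} (hq : Fintype.card F = q) {α : Type*} (s : Finset α)
    (x : α → L) (y : α → F) (i : ℕ) :
    (∑ j ∈ s, x j * algebraMap F L (y j)) ^ q ^ i
      = ∑ j ∈ s, x j ^ q ^ i * algebraMap F L (y j) := by
  obtain ⟨p, hp⟩ := CharP.exists F
  haveI := hp
  haveI : Fact p.Prime := ⟨CharP.char_is_prime F p⟩
  obtain ⟨e, -, hcard⟩ := FiniteField.card F p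
  haveI : CharP L p := charP_of_injective_algebraMap (algebraMap F L).injective p
  have hqe : q = p ^ (e : ℕ) := hq ▸ hcard
  have hqi : q ^ i = p ^ ((e : ℕ) * i) := by rw [hqe, ← pow_mul]
  rw [hqi]
  have : ∀ z : L, z ^ p ^ ((e : ℕ) * i) = iterateFrobenius L p ((e : ℕ) * i) z :=
    fun z => (iterateFrobenius_def ..).symm
  rw [this, map_sum]
  refine Finset.sum_congr rfl fun j _ => ?_
  rw [iterateFrobenius_def, mul_pow, ← map_pow, ← hqi]
  congr 2
  have : (y j) ^ q ^ i = y j := by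
    have := FiniteField.pow_card_pow i (y j)
    rwa [hq] at this
  rw [this]

/-- Moore matrix nonsingularity, phrased as a statement about linear dependencies. -/
lemma moore_dep_eq_zero {q d : ℕ} (hq : Fintype.card F = q) (γ : Fin d → L)
    (hγ : LinearIndependent F γ) (e : Fin d → L)
    (he : ∀ i : Fin d, ∑ m, e m * γ m ^ q ^ (i : ℕ) = 0) : e = 0 := by
  rcases Nat.eq_zero_or_pos d with rfl | hd
  · funext i; exact absurd i.2 (by omega)
  classical
  have hq2 : 2 ≤ q := hq ▸ Fintype.one_lt_card
  set Mo : Matrix (Fin d) (Fin d) L := Matrix.of fun i m => γ m ^ q ^ (i : ℕ) with hMo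
  have hdet : Mo.det ≠ 0 := by
    intro h0
    obtain ⟨g, hg0, hgv⟩ := Matrix.exists_vecMul_eq_zero_iff.mpr h0
    -- the linearized polynomial
    set P : L[X] := ∑ i : Fin d, C (g i) * X ^ (q ^ (i : ℕ)) with hP
    have hroots : ∀ m, ∑ i : Fin d, g i * γ m ^ q ^ (i : ℕ) = 0 := by
      intro m
      have := congrFun hgv m
      simpa [Matrix.vecMul, dotProduct, hMo] using this
    -- P is nonzero
    have hPne : P ≠ 0 := by
      obtain ⟨i0, hi0⟩ := Function.ne_iff.mp hg0
      rw [Pi.zero_apply] at hi0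
      intro h
      apply hi0
      have : P.coeff (q ^ (i0 : ℕ)) = g i0 := by
        rw [hP, finset_sum_coeff]
        rw [Finset.sum_eq_single i0]
        · simp
        · intro i _ hne
          have : q ^ (i : ℕ) ≠ q ^ (i0 : ℕ) := fun hh =>
            hne (Fin.ext (Nat.pow_right_injective hq2 hh))
          simp [coeff_C_mul, coeff_X_pow, this, Ne.symm this]
        · simp
      rw [h] at this
      simpa using this.symm
    -- degree bound
    have hdeg : P.natDegree ≤ q ^ (d - 1) := by
      refine natDegree_sum_le_of_forall_le _ _ fun i _ => ?_
      refine le_trans (natDegree_C_mul_le _ _) ?_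
      rw [natDegree_X_pow]
      exact Nat.pow_le_pow_right (by omega) (by omega)
    -- char p setup
    obtain ⟨p, hp⟩ := CharP.exists F
    haveI := hp
    haveI : Fact p.Prime := ⟨CharP.char_is_prime F p⟩
    obtain ⟨ee, -, hcard⟩ := FiniteField.card F p
    haveI : CharP L p := charP_of_injective_algebraMap (algebraMap F L).injective p
    have hqe : q = p ^ (ee : ℕ) := hq ▸ hcard
    have hqi : ∀ i : ℕ, q ^ i = p ^ ((ee : ℕ) * i) := fun i => by rw [hqe, ← pow_mul]
    -- the F-linear map given by the linearized polynomial
    set Zmap : L →ₗ[F] L :=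
      { toFun := fun x => ∑ i : Fin d, g i * x ^ q ^ (i : ℕ)
        map_add' := by
          intro x y
          rw [← Finset.sum_add_distrib]
          refine Finset.sum_congr rfl fun i _ => ?_
          rw [hqi (i : ℕ), add_pow_char_pow, mul_add]
        map_smul' := by
          intro a x
          rw [RingHom.id_apply, Finset.smul_sum]
          refine Finset.sum_congr rfl fun i _ => ?_
          rw [Algebra.smul_def, Algebra.smul_def, mul_pow, ← map_pow]
          have : a ^ q ^ (i : ℕ) = a := by
            have := FiniteField.pow_card_pow (i : ℕ) a
            rwa [hq] at this
          rw [this]; ring } with hZmap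
    -- every element of the span is a root of P
    set W : Submodule F L := Submodule.span F (Set.range γ) with hW
    have hWker : W ≤ LinearMap.ker Zmap := by
      rw [hW, Submodule.span_le]
      rintro x ⟨m, rfl⟩
      simpa [hZmap] using hroots m
    have heval : ∀ x : L, P.eval x = Zmap x := by
      intro x
      simp [hP, hZmap, eval_finset_sum]
    -- counting
    haveI : Module.Finite F W := Module.Finite.span_of_finite F (Set.finite_range γ)
    haveI : Finite W := Module.finite_of_finite F
    haveI : Fintype W := Fintype.ofFinite _
    have hfr : Module.finrank F W = d := by
      rw [hW, finrank_span_eq_card hγ, Fintype.card_fin]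
    have hcardW : Fintype.card W = q ^ d := by
      rw [Module.card_eq_pow_finrank (K := F) (V := W), hfr, hq]
    have hmem : ∀ x : L, x ∈ W → x ∈ P.roots.toFinset := by
      intro x hx
      rw [Multiset.mem_toFinset, mem_roots hPne]
      exact (heval x).trans (by simpa using hWker hx)
    have hinj : Function.Injective
        (fun x : W => (⟨x.1, hmem x.1 x.2⟩ : {y // y ∈ P.roots.toFinset})) := by
      intro x y hxy
      have := congrArg Subtype.val hxy
      exact Subtype.ext this
    have hle : Fintype.card W ≤ P.natDegree := by
      refine le_trans (Fintype.card_le_of_injective _ hinj) ?_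
      rw [Fintype.card_coe]
      exact le_trans (Multiset.toFinset_card_le _) (card_roots' P)
    rw [hcardW] at hle
    have : q ^ d ≤ q ^ (d - 1) := le_trans hle hdeg
    have hlt : q ^ (d - 1) < q ^ d := Nat.pow_lt_pow_right (by omega) (by omega)
    omega
  have := Matrix.eq_zero_of_mulVec_eq_zero hdet (show Mo.mulVec e = 0 from ?_)
  · exact this
  · funext i
    have := he i
    simpa [Matrix.mulVec, dotProduct, hMo, mul_comm] using this

end Helpers

/-- explicit linearized-polynomial construction of sandwiched MRSCs.
`G0 = [Ĝ; B]`, `β = α·B` over `F_Q`, `Q = q^{t-s}`; stacking `Ĝ` on the Moore matrix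
of `β` gives an `[n,k]` MRSC of `C₀^{(Q)}` containing `Ĉ^{(Q)}`. -/
theorem linearized_sandwiched_mrsc {F L : Type*} [Field F] [Fintype F] [Field L]
    [Algebra F L] {q n t s k : ℕ} (hq : Fintype.card F = q)
    (hts : Module.finrank F L = t - s) (hsk : s ≤ k) (hkt : k ≤ t)
    (Ghat : Matrix (Fin s) (Fin n) F) (Bm : Matrix (Fin (t - s)) (Fin n) F)
    (hnec : ∀ S : Finset (Fin n), S.card = k →
      colRank ((Matrix.fromRows Ghat Bm).map (algebraMap F L)) S = k →
      colRank (Ghat.map (algebraMap F L)) S = s)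
    (b : Module.Basis (Fin (t - s)) F L)
    (β : Fin n → L) (hβ : ∀ j, β j = ∑ i, b i * algebraMap F L (Bm i j)) :
    (∀ i, (Ghat.map (algebraMap F L)) i ∈
        rowSpan (Matrix.fromRows (Ghat.map (algebraMap F L))
          (Matrix.of fun (i : Fin (k - s)) (j : Fin n) => β j ^ q ^ (i : ℕ)))) ∧
      ∀ S : Finset (Fin n), S.card = k →
        colRank ((Matrix.fromRows Ghat Bm).map (algebraMap F L)) S = k →
        colRank (Matrix.fromRows (Ghat.map (algebraMap F L))
          (Matrix.of fun (i : Fin (k - s)) (j : Fin n) => β j ^ q ^ (i : ℕ))) S = k := by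
  classical
  set φ := algebraMap F L with hφ
  constructor
  · intro i
    exact Submodule.subset_span ⟨Sum.inl i, rfl⟩
  intro S hS hG0
  set c : S → Fin n := fun j => (j : Fin n) with hc
  set Ghs : Matrix (Fin s) S F := Ghat.submatrix id c with hGhs
  set Bs : Matrix (Fin (t - s)) S F := Bm.submatrix id c with hBs
  have hGhatrank : colRank (Ghat.map φ) S = s := hnec S hS hG0
  have hcardS : Fintype.card S = k := by rw [Fintype.card_coe, hS]
  -- the submatrix of the original stacked matrix
  have hsub0 : ((Matrix.fromRows Ghat Bm).map φ).submatrix id c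
      = Matrix.fromRows (Ghs.map φ) (Bs.map φ) := by
    ext i j; cases i <;> rfl
  -- triviality of the F-kernel of the stacked submatrix
  have h1 : ∀ x : S → F, Ghs *ᵥ x = 0 → Bs *ᵥ x = 0 → x = 0 := by
    intro x hx1 hx2
    have hrank : (Matrix.fromRows (Ghs.map φ) (Bs.map φ)).rank = Fintype.card S := by
      rw [← hsub0, hcardS]
      exact hG0
    have hzero1 : (Ghs.map φ) *ᵥ (φ ∘ x) = 0 := by
      funext i
      rw [← RingHom.map_mulVec, hx1]
      simp
    have hzero2 : (Bs.map φ) *ᵥ (φ ∘ x) = 0 := by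
      funext i
      rw [← RingHom.map_mulVec, hx2]
      simp
    have h0 : (Matrix.fromRows (Ghs.map φ) (Bs.map φ)) *ᵥ (φ ∘ x) = 0 := by
      rw [fromRows_mulVec, hzero1, hzero2]
      ext (_ | _) <;> rfl
    have := mulVec_eq_zero_of_rank_card _ hrank h0
    funext j
    exact (algebraMap F L).injective (by simpa using congrFun this j)
  -- the L-kernel of Ĝ|_S
  set KL : Submodule L (S → L) := LinearMap.ker (Ghs.map φ).mulVecLin with hKL
  have hsubG : (Ghat.map φ).submatrix id c = Ghs.map φ := rfl
  have hKLrank : Module.finrank L KL = k - s := by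
    have h2 := matrix_rank_add_ker (Ghs.map φ)
    rw [hcardS] at h2
    have h3 : (Ghs.map φ).rank = s := by rw [← hsubG]; exact hGhatrank
    rw [hKL]
    omega
  -- the F-kernel of Ĝ|_S and its basis
  set KF : Submodule F (S → F) := LinearMap.ker Ghs.mulVecLin with hKF
  set d : ℕ := Module.finrank F KF with hdd
  set w : Module.Basis (Fin d) F KF := Module.finBasis F KF with hw
  have hwmul : ∀ m : Fin d, Ghs *ᵥ ((w m : S → F)) = 0 := by
    intro m
    have h2 : (w m : S → F) ∈ LinearMap.ker Ghs.mulVecLin := (w m).2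
    rw [LinearMap.mem_ker, Matrix.mulVecLin_apply] at h2
    exact h2
  have hmemKL : ∀ m : Fin d, φ ∘ (w m : S → F) ∈ KL := by
    intro m
    rw [hKL, LinearMap.mem_ker, Matrix.mulVecLin_apply]
    funext i
    rw [← RingHom.map_mulVec, hwmul m]
    simp
  have hd : d ≤ k - s := by
    have hvind : LinearIndependent F (fun m : Fin d => (w m : S → F)) :=
      w.linearIndependent.map' KF.subtype (Submodule.ker_subtype KF)
    have hLind : LinearIndependent L (fun m : Fin d => φ ∘ (w m : S → F)) :=
      linIndep_map b _ hvind
    have hwL : LinearIndependent L (fun m : Fin d => (⟨φ ∘ (w m : S → F), hmemKL m⟩ : KL)) :=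
      LinearIndependent.of_comp KL.subtype hLind
    have := hwL.fintype_card_le_finrank
    rwa [Fintype.card_fin, hKLrank] at this
  -- prove the rank statement
  have hsub1 : ((Matrix.fromRows (Ghat.map φ)
        (Matrix.of fun (i : Fin (k - s)) (j : Fin n) => β j ^ q ^ (i : ℕ)))).submatrix id c
      = Matrix.fromRows (Ghs.map φ)
        (Matrix.of fun (i : Fin (k - s)) (j : S) => β (c j) ^ q ^ (i : ℕ)) := by
    ext i j; cases i <;> rfl
  show (_ : Matrix _ _ L).rank = k
  rw [hsub1]
  conv_rhs => rw [← hcardS]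
  apply rank_eq_card_of_ker
  intro v hv
  rw [fromRows_mulVec] at hv
  have hvG : (Ghs.map φ) *ᵥ v = 0 := by
    funext i; exact congrFun hv (Sum.inl i)
  have hvM : ∀ i : Fin (k - s), ∑ j : S, β (c j) ^ q ^ (i : ℕ) * v j = 0 := by
    intro i
    have := congrFun hv (Sum.inr i)
    simpa [Matrix.mulVec, dotProduct] using this
  -- decompose v over the basis b
  set u : Fin (t - s) → S → F := fun r j => b.repr (v j) r with hu
  have hvdecomp : ∀ j, v j = ∑ r, b r * φ (u r j) := by
    intro j
    conv_lhs => rw [← b.sum_repr (v j)]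
    exact Finset.sum_congr rfl fun r _ => by rw [Algebra.smul_def, mul_comm, hu]
  have hur : ∀ r, Ghs *ᵥ u r = 0 := by
    have key : ∀ i, (fun r => (Ghs *ᵥ u r) i) = 0 := by
      intro i
      apply basis_mul_eq_zero b
      have h0 : ((Ghs.map φ) *ᵥ v) i = 0 := congrFun hvG i
      rw [Matrix.mulVec, dotProduct] at h0
      calc ∑ r, b r * φ ((Ghs *ᵥ u r) i)
          = ∑ r, ∑ j : S, b r * φ (Ghs i j * u r j) := by
            refine Finset.sum_congr rfl fun r _ => ?_
            rw [Matrix.mulVec, dotProduct, map_sum, Finset.mul_sum]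
        _ = ∑ j : S, ∑ r, b r * φ (Ghs i j * u r j) := Finset.sum_comm
        _ = ∑ j : S, (Ghs.map φ) i j * v j := by
            refine Finset.sum_congr rfl fun j _ => ?_
            rw [hvdecomp j, Finset.mul_sum]
            refine Finset.sum_congr rfl fun r _ => ?_
            rw [_root_.map_mul]
            simp [Matrix.map_apply]
            ring
        _ = 0 := h0
    intro r
    funext i
    exact congrFun (key i) r
  set uK : Fin (t - s) → KF := fun r => ⟨u r, by
    show u r ∈ LinearMap.ker Ghs.mulVecLin
    rw [LinearMap.mem_ker, Matrix.mulVecLin_apply]; exact hur r⟩ with huK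
  set a : Fin (t - s) → Fin d → F := fun r m => w.repr (uK r) m with ha
  have huw : ∀ r (j : S), u r j = ∑ m, a r m * (w m : S → F) j := by
    intro r j
    have h0 := w.sum_repr (uK r)
    have h1' := congrArg (fun z : KF => (z : S → F) j) h0
    calc u r j = ((uK r : KF) : S → F) j := rfl
      _ = ((∑ m, w.repr (uK r) m • w m : KF) : S → F) j := by rw [w.sum_repr]
      _ = ∑ m, a r m * (w m : S → F) j := by
          simp only [Submodule.coe_sum, Submodule.coe_smul, Finset.sum_apply, Pi.smul_apply,
            smul_eq_mul, ha]
  -- the coefficients e' and elements γ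
  set e' : Fin d → L := fun m => ∑ r, a r m • b r with he'
  have hve : ∀ j : S, v j = ∑ m, e' m * φ ((w m : S → F) j) := by
    intro j
    calc v j = ∑ r, b r * φ (u r j) := hvdecomp j
      _ = ∑ r, ∑ m, (a r m • b r) * φ ((w m : S → F) j) := by
          refine Finset.sum_congr rfl fun r _ => ?_
          rw [huw r j, map_sum, Finset.mul_sum]
          refine Finset.sum_congr rfl fun m _ => ?_
          rw [_root_.map_mul, Algebra.smul_def]
          ring
      _ = ∑ m, ∑ r, (a r m • b r) * φ ((w m : S → F) j) := Finset.sum_comm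
      _ = ∑ m, e' m * φ ((w m : S → F) j) := by
          refine Finset.sum_congr rfl fun m _ => ?_
          rw [he', Finset.sum_mul]
  set γ : Fin d → L := fun m => ∑ j : S, β (c j) * φ ((w m : S → F) j) with hγ
  -- the β-expansion over the basis b
  have hβexp : ∀ x : S → F, ∑ j : S, β (c j) * φ (x j) = ∑ i, b i * φ ((Bs *ᵥ x) i) := by
    intro x
    calc ∑ j : S, β (c j) * φ (x j)
        = ∑ j : S, ∑ i, b i * φ (Bs i j * x j) := by
          refine Finset.sum_congr rfl fun j _ => ?_
          rw [hβ (c j), Finset.sum_mul]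
          refine Finset.sum_congr rfl fun i _ => ?_
          rw [_root_.map_mul]
          simp [hBs, Matrix.submatrix_apply]
          ring
      _ = ∑ i, ∑ j : S, b i * φ (Bs i j * x j) := Finset.sum_comm
      _ = ∑ i, b i * φ ((Bs *ᵥ x) i) := by
          refine Finset.sum_congr rfl fun i _ => ?_
          rw [Matrix.mulVec, dotProduct, map_sum, Finset.mul_sum]
  -- γ is F-linearly independent
  have hγind : LinearIndependent F γ := by
    rw [Fintype.linearIndependent_iff]
    intro a' ha'
    set X : KF := ∑ m, a' m • w m with hX
    set x : S → F := (X : S → F) with hx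
    have hxval : ∀ j, x j = ∑ m, a' m * (w m : S → F) j := by
      intro j
      rw [hx, hX]
      have hco : ((∑ m, a' m • w m : KF) : S → F) = ∑ m, a' m • ((w m : S → F)) := by
        simp
      rw [hco]
      simp [Finset.sum_apply]
    have hGx : Ghs *ᵥ x = 0 := by
      have h2 : (X : S → F) ∈ LinearMap.ker Ghs.mulVecLin := X.2
      rw [LinearMap.mem_ker, Matrix.mulVecLin_apply] at h2
      exact h2
    have hsum : ∑ j : S, β (c j) * φ (x j) = 0 := by
      calc ∑ j : S, β (c j) * φ (x j)
          = ∑ j : S, ∑ m, a' m • (β (c j) * φ ((w m : S → F) j)) := by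
            refine Finset.sum_congr rfl fun j _ => ?_
            rw [hxval j, map_sum, Finset.mul_sum]
            refine Finset.sum_congr rfl fun m _ => ?_
            rw [_root_.map_mul, Algebra.smul_def]
            ring
        _ = ∑ m, a' m • γ m := by
            rw [Finset.sum_comm]
            refine Finset.sum_congr rfl fun m _ => ?_
            rw [hγ, Finset.smul_sum]
        _ = 0 := ha'
    rw [hβexp] at hsum
    have hBx : Bs *ᵥ x = 0 := basis_mul_eq_zero b _ hsum
    have hX0 : X = 0 := Subtype.ext (h1 x hGx hBx)
    rw [hX] at hX0
    exact Fintype.linearIndependent_iff.mp w.linearIndependent a' hX0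
  -- Moore conditions on e'
  have hMoore : ∀ i : Fin (k - s), ∑ m, e' m * γ m ^ q ^ (i : ℕ) = 0 := by
    intro i
    have h0 := hvM i
    calc ∑ m, e' m * γ m ^ q ^ (i : ℕ)
        = ∑ m, e' m * ∑ j : S, β (c j) ^ q ^ (i : ℕ) * φ ((w m : S → F) j) := by
          refine Finset.sum_congr rfl fun m _ => ?_
          rw [hγ, frob_sum_pow hq]
      _ = ∑ m, ∑ j : S, e' m * (β (c j) ^ q ^ (i : ℕ) * φ ((w m : S → F) j)) := by
          refine Finset.sum_congr rfl fun m _ => ?_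
          rw [Finset.mul_sum]
      _ = ∑ j : S, ∑ m, e' m * (β (c j) ^ q ^ (i : ℕ) * φ ((w m : S → F) j)) :=
          Finset.sum_comm
      _ = ∑ j : S, β (c j) ^ q ^ (i : ℕ) * v j := by
          refine Finset.sum_congr rfl fun j _ => ?_
          rw [hve j, Finset.mul_sum]
          refine Finset.sum_congr rfl fun m _ => ?_
          ring
      _ = 0 := h0
  have he0 : e' = 0 := by
    apply moore_dep_eq_zero hq γ hγind
    intro i
    exact hMoore ⟨(i : ℕ), lt_of_lt_of_le i.2 hd⟩
  funext j
  rw [hve j]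
  simp [he0]
end

section
/- Consider the two-receiver broadcast function update problem with full-rank matrices A (m_A × n) and B (m_B × n) over F_q, and sparsity parameter ε, and suppose C_A ∩ C_B = {0} (the row spaces intersect trivially). Then for any valid scheme (H, D_1, D_2), the communication cost satisfies ℓ = rank(H) ≥ min(m_A, 2ε) + min(m_B, 2ε). -/
open Matrix

section Helpers
variable {F : Type*} [Field F] [DecidableEq F] {n m mA mB ℓ : ℕ}

lemma hamming_split (ε : ℕ) (c : Fin n → F) (hc : hammingNorm c ≤ 2 * ε) :
    ∃ E E' : Fin n → F, hammingNorm E ≤ ε ∧ hammingNorm E' ≤ ε ∧ c = E - E' := by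
  classical
  set S : Finset (Fin n) := {i | c i ≠ 0} with hS
  have hScard : S.card = hammingNorm c := rfl
  obtain ⟨S1, hS1sub, hS1card⟩ := Finset.exists_subset_card_eq (s := S) (min_le_left S.card ε)
  refine ⟨fun j => if j ∈ S1 then c j else 0, fun j => (if j ∈ S1 then c j else 0) - c j, ?_, ?_, by ext j; simp⟩
  · apply le_trans (Finset.card_le_card (s := ({j | (if j ∈ S1 then c j else 0) ≠ 0} : Finset (Fin n))) (t := S1) ?_)
    · omega
    · intro j hj
      simp only [Finset.mem_filter, Finset.mem_univ, true_and] at hj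
      by_contra hn; simp [hn] at hj
  · apply le_trans (Finset.card_le_card (s := ({j | ((if j ∈ S1 then c j else 0) - c j) ≠ 0} : Finset (Fin n))) (t := S \ S1) ?_)
    · have : (S \ S1).card = S.card - S1.card := Finset.card_sdiff_of_subset hS1sub
      rw [this]; omega
    · intro j hj
      simp only [Finset.mem_filter, Finset.mem_univ, true_and] at hj
      rw [Finset.mem_sdiff]
      by_cases h1 : j ∈ S1
      · simp [h1] at hj
      · refine ⟨?_, h1⟩
        simp only [h1, if_false, zero_sub, ne_eq, neg_eq_zero] at hj
        simp [hS, hj]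

lemma support_span_singles (I : Finset (Fin n)) (v : Fin n → F)
    (hv : v ∈ Submodule.span F ((fun i => Pi.single i (1:F)) '' (I : Set (Fin n)))) :
    hammingNorm v ≤ I.card := by
  classical
  have h0 : ∀ j, j ∉ I → v j = 0 := by
    intro j hj
    induction hv using Submodule.span_induction with
    | mem x hx =>
      obtain ⟨i, hi, rfl⟩ := hx
      exact Pi.single_eq_of_ne (by rintro rfl; exact hj hi) 1
    | zero => rfl
    | add x y _ _ hx hy => simp [hx, hy]
    | smul a x _ hx => simp [hx]
  apply Finset.card_le_card
  intro j hj
  simp only [Finset.mem_filter, Finset.mem_univ, true_and] at hj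
  by_contra hn
  exact hj (h0 j hn)

lemma key_zero {A : Matrix (Fin m) (Fin n) F} {H : Matrix (Fin ℓ) (Fin n) F} {ε : ℕ}
    {D : (Fin ℓ → F) → (Fin m → F) → (Fin m → F)} (hD : IsValidScheme A H ε D)
    (z c : Fin n → F) (hz : H.mulVec z = 0) (hzc : A.mulVec (z - c) = 0)
    (hc : hammingNorm c ≤ 2 * ε) : A.mulVec z = 0 := by
  obtain ⟨E, E', hE, hE', rfl⟩ := hamming_split ε c hc
  have e1 := hD (z - E) E hE
  have e2 := hD (-E') E' hE'
  rw [sub_add_cancel] at e1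
  rw [neg_add_cancel] at e2
  have hX : A.mulVec (z - E) = A.mulVec (-E') := by
    have harg : z - E - -E' = z - (E - E') := by ring
    have : A.mulVec (z - E) - A.mulVec (-E') = A.mulVec (z - (E - E')) := by
      rw [← Matrix.mulVec_sub, harg]
    rw [← sub_eq_zero, this, hzc]
  rw [hX, hz] at e1
  have e2' : D 0 (A.mulVec (-E')) = 0 := by simpa using e2
  rw [← e1]
  exact e2'

lemma per_receiver {A : Matrix (Fin m) (Fin n) F} {H : Matrix (Fin ℓ) (Fin n) F} {ε : ℕ}
    {D : (Fin ℓ → F) → (Fin m → F) → (Fin m → F)} (hD : IsValidScheme A H ε D)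
    (hA : A.rank = m) :
    Module.finrank F ↥(LinearMap.ker H.mulVecLin ⊔ LinearMap.ker A.mulVecLin) + min m (2*ε) ≤ n := by
  classical
  set LA := LinearMap.ker A.mulVecLin with hLA
  set K := LinearMap.ker H.mulVecLin with hK
  have hpidim : Module.finrank F (Fin n → F) = n := by simp
  have hrn := LinearMap.finrank_range_add_finrank_ker (A.mulVecLin)
  rw [hpidim] at hrn
  have hLAdim : Module.finrank F LA + m = n := by
    have hr : Module.finrank F ↥(LinearMap.range A.mulVecLin) = m := hA
    rw [hLA]
    omega
  have hqdim : Module.finrank F ((Fin n → F) ⧸ LA) = m := by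
    have := Submodule.finrank_quotient_add_finrank LA
    rw [hpidim] at this; omega
  set v : Fin n → (Fin n → F) ⧸ LA := fun i => LA.mkQ (Pi.single i (1:F)) with hv
  have hspan : Submodule.span F (Set.range v) = ⊤ := by
    have h1 : Submodule.span F (Set.range fun i : Fin n => Pi.single i (1:F)) = ⊤ := by
      rw [eq_top_iff]
      intro x _
      have hx : x = ∑ i, x i • (Pi.single i (1:F) : Fin n → F) := by
        ext j
        simp [Pi.single_apply]
      rw [hx]
      exact Submodule.sum_mem _ (fun i _ =>
        Submodule.smul_mem _ _ (Submodule.subset_span ⟨i, rfl⟩))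
    have h2 : Set.range v = LA.mkQ '' (Set.range fun i : Fin n => Pi.single i (1:F)) := by
      rw [← Set.range_comp]; rfl
    rw [h2, ← Submodule.map_span, h1, Submodule.map_top, Submodule.range_mkQ]
  obtain ⟨b, hbsub, hbspan, hbind⟩ := exists_linearIndependent F (Set.range v)
  rw [hspan] at hbspan
  have hbfin : b.Finite := hbind.set_finite_of_isNoetherian
  set bF := hbfin.toFinset with hbF
  set t := min m (2*ε) with ht
  have hcardb : m ≤ bF.card := by
    have h2 := finrank_span_finset_le_card (R := F) bF
    rw [Set.finrank, hbfin.coe_toFinset, hbspan, finrank_top, hqdim] at h2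
    exact h2
  obtain ⟨b', hb'sub, hb'card⟩ := Finset.exists_subset_card_eq
    (s := bF) (n := t) (le_trans (min_le_left _ _) hcardb)
  have hchoice : ∀ x ∈ b', ∃ i, v i = x := by
    intro x hx
    exact hbsub (hbfin.mem_toFinset.mp (hb'sub hx))
  set I : Finset (Fin n) := b'.attach.image (fun x => (hchoice x.1 x.2).choose) with hI
  have hIcard : I.card ≤ t := le_trans (Finset.card_image_le) (by rw [Finset.card_attach, hb'card])
  set U := Submodule.span F (↑b' : Set ((Fin n → F) ⧸ LA)) with hU
  have hb'ind : LinearIndependent F ((↑) : ↥(↑b' : Set ((Fin n → F) ⧸ LA)) → ((Fin n → F) ⧸ LA)) := by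
    apply LinearIndepOn.mono (v := id) (s := b) (t := (↑b' : Set ((Fin n → F) ⧸ LA))) hbind
    intro x hx
    exact hbfin.mem_toFinset.mp (hb'sub hx)
  have hUdim : Module.finrank F U = t := by
    rw [hU, finrank_span_finset_eq_card hb'ind, hb'card]
  have hUle : U ≤ Submodule.map LA.mkQ
      (Submodule.span F ((fun i => Pi.single i (1:F)) '' (I : Set (Fin n)))) := by
    rw [hU, Submodule.span_le]
    intro x hx
    have hxx : x ∈ b' := hx
    have hmemI : (hchoice x hxx).choose ∈ I := by
      rw [hI]
      exact Finset.mem_image.mpr ⟨⟨x, hxx⟩, Finset.mem_attach _ _, rfl⟩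
    refine ⟨Pi.single (hchoice x hxx).choose 1, Submodule.subset_span ?_, ?_⟩
    · exact Set.mem_image_of_mem _ (by exact_mod_cast hmemI)
    · exact (hchoice x hxx).choose_spec
  have hdisj : Submodule.map LA.mkQ K ⊓ U = ⊥ := by
    rw [Submodule.eq_bot_iff]
    rintro u ⟨⟨z, hzK, rfl⟩, huU⟩
    obtain ⟨c, hcspan, hcz⟩ := hUle huU
    have hzc : A.mulVec (z - c) = 0 := by
      have hmem : z - c ∈ LA := by
        rw [← Submodule.Quotient.eq (p := LA)]
        exact hcz.symm
      simpa [hLA, Matrix.mulVecLin] using hmem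
    have hz0 : H.mulVec z = 0 := by simpa [hK, Matrix.mulVecLin] using hzK
    have hcnorm : hammingNorm c ≤ 2*ε :=
      le_trans (le_trans (support_span_singles I c hcspan) hIcard) (min_le_right _ _)
    have hz1 : A.mulVec z = 0 := key_zero hD z c hz0 hzc hcnorm
    have hz2 : z ∈ LA := by simpa [hLA, Matrix.mulVecLin] using hz1
    simpa [Submodule.Quotient.mk_eq_zero] using hz2
  have hQU : Module.finrank F ↥(Submodule.map LA.mkQ K) + t ≤ m := by
    have hs := Submodule.finrank_sup_add_finrank_inf_eq (Submodule.map LA.mkQ K) U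
    rw [hdisj, hUdim] at hs
    simp only [finrank_bot] at hs
    have hle : Module.finrank F ↥(Submodule.map LA.mkQ K ⊔ U) ≤ m := by
      rw [← hqdim]; exact Submodule.finrank_le _
    omega
  have hsum : Module.finrank F ↥(K ⊔ LA)
      = Module.finrank F ↥(Submodule.map LA.mkQ K) + Module.finrank F LA := by
    have hrnφ := LinearMap.finrank_range_add_finrank_ker (LA.mkQ.comp (K ⊔ LA).subtype)
    have hrange : LinearMap.range (LA.mkQ.comp (K ⊔ LA).subtype) = Submodule.map LA.mkQ K := by
      rw [LinearMap.range_comp, Submodule.range_subtype, Submodule.map_sup]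
      have hbot : Submodule.map LA.mkQ LA = ⊥ := by
        rw [Submodule.eq_bot_iff]
        rintro x ⟨y, hy, rfl⟩
        simpa [Submodule.Quotient.mk_eq_zero] using hy
      rw [hbot, sup_bot_eq]
    have hker : LinearMap.ker (LA.mkQ.comp (K ⊔ LA).subtype) = Submodule.comap (K ⊔ LA).subtype LA := by
      rw [LinearMap.ker_comp, Submodule.ker_mkQ]
    have hkdim : Module.finrank F ↥(Submodule.comap (K ⊔ LA).subtype LA) = Module.finrank F LA :=
      (Submodule.comapSubtypeEquivOfLe le_sup_right).finrank_eq
    rw [hrange, hker, hkdim] at hrnφ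
    omega
  omega

lemma sup_ker_eq_top {A : Matrix (Fin mA) (Fin n) F} {B : Matrix (Fin mB) (Fin n) F}
    (hA : A.rank = mA) (hB : B.rank = mB)
    (htriv : rowSpan A ⊓ rowSpan B = (⊥ : Submodule F (Fin n → F))) :
    LinearMap.ker A.mulVecLin ⊔ LinearMap.ker B.mulVecLin = ⊤ := by
  classical
  have hpidim : Module.finrank F (Fin n → F) = n := by simp
  set C := Matrix.fromRows A B with hC
  have hkerC : LinearMap.ker C.mulVecLin = LinearMap.ker A.mulVecLin ⊓ LinearMap.ker B.mulVecLin := by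
    ext w
    simp only [LinearMap.mem_ker, Matrix.mulVecLin_apply, Submodule.mem_inf, hC,
      Matrix.fromRows_mulVec]
    constructor
    · intro h
      constructor
      · ext i; exact congrFun h (Sum.inl i)
      · ext i; exact congrFun h (Sum.inr i)
    · rintro ⟨h1, h2⟩
      ext (i | i)
      · exact congrFun h1 i
      · exact congrFun h2 i
  have hrowA : Module.finrank F (rowSpan A) = mA := by
    have := A.rank_eq_finrank_span_row
    rw [hA] at this
    exact this.symm
  have hrowB : Module.finrank F (rowSpan B) = mB := by
    have := B.rank_eq_finrank_span_row
    rw [hB] at this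
    exact this.symm
  have hrankC : C.rank = mA + mB := by
    rw [C.rank_eq_finrank_span_row]
    have hrows : Set.range C = Set.range A ∪ Set.range B := by
      rw [hC]
      exact Set.Sum.elim_range A B
    rw [show Set.range C.row = Set.range C from rfl, hrows, Submodule.span_union]
    have hs := Submodule.finrank_sup_add_finrank_inf_eq (rowSpan A) (rowSpan B)
    rw [htriv] at hs
    simp only [finrank_bot] at hs
    have hA' : Submodule.span F (Set.range A) = rowSpan A := rfl
    have hB' : Submodule.span F (Set.range B) = rowSpan B := rfl
    rw [hA', hB']
    omega
  have hrnC := LinearMap.finrank_range_add_finrank_ker (C.mulVecLin)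
  rw [hpidim, hkerC] at hrnC
  have hrC : Module.finrank F ↥(LinearMap.range C.mulVecLin) = mA + mB := hrankC
  have hrnA := LinearMap.finrank_range_add_finrank_ker (A.mulVecLin)
  rw [hpidim] at hrnA
  have hrA : Module.finrank F ↥(LinearMap.range A.mulVecLin) = mA := hA
  have hrnB := LinearMap.finrank_range_add_finrank_ker (B.mulVecLin)
  rw [hpidim] at hrnB
  have hrB : Module.finrank F ↥(LinearMap.range B.mulVecLin) = mB := hB
  have hs := Submodule.finrank_sup_add_finrank_inf_eq (LinearMap.ker A.mulVecLin) (LinearMap.ker B.mulVecLin)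
  apply Submodule.eq_top_of_finrank_eq
  rw [hpidim]
  omega

end Helpers

/-- broadcast lower bound when the two row spaces intersect trivially:
`rank H ≥ min(m_A, 2ε) + min(m_B, 2ε)` for any valid broadcast scheme. -/
theorem broadcast_trivial_intersection_bound {F : Type*} [Field F] [Fintype F]
    [DecidableEq F] {n mA mB ℓ ε : ℕ} (hmA : mA ≤ n) (hmB : mB ≤ n)
    (A : Matrix (Fin mA) (Fin n) F) (hA : A.rank = mA)
    (B : Matrix (Fin mB) (Fin n) F) (hB : B.rank = mB)
    (htriv : rowSpan A ⊓ rowSpan B = (⊥ : Submodule F (Fin n → F)))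
    (H : Matrix (Fin ℓ) (Fin n) F)
    (D1 : (Fin ℓ → F) → (Fin mA → F) → (Fin mA → F))
    (D2 : (Fin ℓ → F) → (Fin mB → F) → (Fin mB → F))
    (h1 : IsValidScheme A H ε D1) (h2 : IsValidScheme B H ε D2) :
    min mA (2 * ε) + min mB (2 * ε) ≤ H.rank := by
  classical
  set LA := LinearMap.ker A.mulVecLin with hLA
  set LB := LinearMap.ker B.mulVecLin with hLB
  set K := LinearMap.ker H.mulVecLin with hK
  have hpidim : Module.finrank F (Fin n → F) = n := by simp
  have hKA := per_receiver h1 hA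
  have hKB := per_receiver h2 hB
  rw [← hK, ← hLA] at hKA
  rw [← hK, ← hLB] at hKB
  have hsup := sup_ker_eq_top hA hB htriv
  rw [← hLA, ← hLB] at hsup
  have hs := Submodule.finrank_sup_add_finrank_inf_eq (K ⊔ LA) (K ⊔ LB)
  have htop : (K ⊔ LA) ⊔ (K ⊔ LB) = ⊤ := by
    rw [sup_sup_sup_comm, sup_idem, hsup, sup_top_eq]
  rw [htop, finrank_top, hpidim] at hs
  have hinf : Module.finrank F K ≤ Module.finrank F ↥((K ⊔ LA) ⊓ (K ⊔ LB)) :=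
    Submodule.finrank_mono (le_inf le_sup_left le_sup_left)
  have hrnH := LinearMap.finrank_range_add_finrank_ker (H.mulVecLin)
  rw [hpidim, ← hK] at hrnH
  have hrH : H.rank = Module.finrank F ↥(LinearMap.range H.mulVecLin) := rfl
  omega
end

section
/- Consider the two-receiver broadcast function update problem with full-rank matrices A (m_A × n) and B (m_B × n) over F_q, sparsity ε, with m_A > 2ε and m_B > 2ε. Let H̃ generate C_A ∩ C_B, and define θ_A = min over 2ε-cores S of C_A^⊥ (|S| = 2ε) of rank(H̃|_S), θ_B analogously for C_B^⊥, and θ = min(θ_A, θ_B). Then any valid scheme (H, D_1, D_2) has communication cost ℓ = rank(H) ≥ 4ε - θ. -/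
set_option maxHeartbeats 1000000


open Matrix

namespace BroadcastAux

open Module Submodule

variable {F : Type*} [Field F]

section Perp

variable (F) in
/-- The dot-product bilinear form on `ι → F`. -/
noncomputable def dotForm (ι : Type*) [Fintype ι] : LinearMap.BilinForm F (ι → F) :=
  LinearMap.mk₂ F (fun v w => v ⬝ᵥ w)
    (fun _ _ _ => add_dotProduct _ _ _)
    (fun c m n => by simp [smul_dotProduct, smul_eq_mul])
    (fun _ _ _ => dotProduct_add _ _ _)
    (fun c m n => by simp [dotProduct_smul, smul_eq_mul])

variable {ι : Type*} [Fintype ι]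

@[simp] lemma dotForm_apply (v w : ι → F) : dotForm F ι v w = v ⬝ᵥ w := rfl

lemma dotForm_isRefl : (dotForm F ι).IsRefl := fun v w h => by
  rw [dotForm_apply, dotProduct_comm]; exact h

lemma dotForm_nondeg [DecidableEq ι] : (dotForm F ι).Nondegenerate := by
  refine (LinearMap.IsRefl.nondegenerate_iff_separatingLeft (B := dotForm F ι)
    (fun v w h => dotForm_isRefl v w h)).mpr ?_
  intro v hv
  funext i
  have := hv (Pi.single i 1)
  rw [dotForm_apply, dotProduct_single, mul_one] at this
  simpa using this

lemma orth_sup (U V : Submodule F (ι → F)) :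
    (dotForm F ι).orthogonal (U ⊔ V) =
      (dotForm F ι).orthogonal U ⊓ (dotForm F ι).orthogonal V := by
  refine le_antisymm (le_inf (LinearMap.BilinForm.orthogonal_le le_sup_left)
    (LinearMap.BilinForm.orthogonal_le le_sup_right)) ?_
  intro w hw
  rw [LinearMap.BilinForm.mem_orthogonal_iff]
  intro c hc
  obtain ⟨u, hu, v, hv, rfl⟩ := Submodule.mem_sup.mp hc
  have h1 := LinearMap.BilinForm.mem_orthogonal_iff.mp hw.1 u hu
  have h2 := LinearMap.BilinForm.mem_orthogonal_iff.mp hw.2 v hv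
  rw [map_add, LinearMap.add_apply, h1, h2, add_zero]

lemma orth_inf [DecidableEq ι] (U V : Submodule F (ι → F)) :
    (dotForm F ι).orthogonal (U ⊓ V) =
      (dotForm F ι).orthogonal U ⊔ (dotForm F ι).orthogonal V := by
  refine le_antisymm ?_ (sup_le (LinearMap.BilinForm.orthogonal_le inf_le_left)
    (LinearMap.BilinForm.orthogonal_le inf_le_right))
  have hUV : U ⊓ V = (dotForm F ι).orthogonal
      ((dotForm F ι).orthogonal U ⊔ (dotForm F ι).orthogonal V) := by
    rw [orth_sup, LinearMap.BilinForm.orthogonal_orthogonal dotForm_nondeg dotForm_isRefl,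
      LinearMap.BilinForm.orthogonal_orthogonal dotForm_nondeg dotForm_isRefl]
  rw [hUV, LinearMap.BilinForm.orthogonal_orthogonal dotForm_nondeg dotForm_isRefl]

lemma orth_rowSpan {m : Type*} [Fintype m] (M : Matrix m ι F) :
    (dotForm F ι).orthogonal (rowSpan M) = LinearMap.ker M.mulVecLin := by
  ext v
  rw [LinearMap.BilinForm.mem_orthogonal_iff, LinearMap.mem_ker]
  constructor
  · intro h
    funext i
    have := h (M i) (Submodule.subset_span ⟨i, rfl⟩)
    rw [dotForm_apply] at this
    simpa [Matrix.mulVecLin_apply, Matrix.mulVec] using this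
  · intro h c hc
    rw [dotForm_apply]
    have hc' : c ∈ LinearMap.range M.vecMulLinear := by
      rw [range_vecMulLinear]; exact hc
    obtain ⟨x, rfl⟩ := hc'
    rw [Matrix.vecMulLinear_apply, ← dotProduct_mulVec]
    have hMv : M *ᵥ v = 0 := by
      have := h; rwa [Matrix.mulVecLin_apply] at this
    rw [hMv, dotProduct_zero]

lemma orth_bot [DecidableEq ι] :
    (dotForm F ι).orthogonal (⊥ : Submodule F (ι → F)) = ⊤ := by
  rw [eq_top_iff]
  intro x _
  rw [LinearMap.BilinForm.mem_orthogonal_iff]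
  intro n hn
  rw [Submodule.mem_bot] at hn
  subst hn
  rw [map_zero, LinearMap.zero_apply]

end Perp

lemma finrank_map_add_finrank_inf_ker {M N : Type*} [AddCommGroup M] [Module F M]
    [AddCommGroup N] [Module F N] [FiniteDimensional F M]
    (f : M →ₗ[F] N) (U : Submodule F M) :
    finrank F (U.map f) + finrank F (U ⊓ LinearMap.ker f : Submodule F M) = finrank F U := by
  have h := LinearMap.finrank_range_add_finrank_ker (f.comp U.subtype)
  rw [LinearMap.range_comp, Submodule.range_subtype, LinearMap.ker_comp] at h
  have e1 : Submodule.comap U.subtype (LinearMap.ker f) =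
      Submodule.comap U.subtype (U ⊓ LinearMap.ker f) := by
    rw [Submodule.comap_inf, Submodule.comap_subtype_self, top_inf_eq]
  rw [e1, (Submodule.comapSubtypeEquivOfLe (inf_le_left :
    U ⊓ LinearMap.ker f ≤ U)).finrank_eq] at h
  exact h

lemma colRank_eq {m n : ℕ} (M : Matrix (Fin m) (Fin n) F) (S : Finset (Fin n)) :
    colRank M S = finrank F
      ((rowSpan M).map (LinearMap.funLeft F F (fun j : S => (j : Fin n)))) := by
  have hr : Set.range (M.submatrix id (fun j : S => (j : Fin n))).row =
      ⇑(LinearMap.funLeft F F (fun j : S => (j : Fin n))) '' Set.range (fun i => M i) := by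
    rw [show (M.submatrix id (fun j : S => (j : Fin n))).row =
      ⇑(LinearMap.funLeft F F (fun j : S => (j : Fin n))) ∘ (fun i => M i) from rfl,
      Set.range_comp]
  rw [colRank, Matrix.rank_eq_finrank_span_row, rowSpan, Submodule.map_span, hr]

lemma rank_eq_rowSpan {m n : ℕ} (M : Matrix (Fin m) (Fin n) F) :
    M.rank = finrank F (rowSpan M) :=
  Matrix.rank_eq_finrank_span_row M

lemma exists_core {m n : ℕ} (A : Matrix (Fin m) (Fin n) F) (hA : A.rank = m)
    {k : ℕ} (hk : k ≤ m) :
    ∃ S : Finset (Fin n), S.card = k ∧ colRank A S = k := by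
  classical
  have hspan : finrank F (span F (Set.range Aᵀ)) = m := by
    rw [Matrix.rank_eq_finrank_span_cols] at hA; exact hA
  obtain ⟨t, hts, htspan, htli⟩ := exists_linearIndependent F (Set.range Aᵀ)
  have hfin : t.Finite := Set.finite_coe_iff.mp htli.finite
  haveI := hfin.fintype
  have hcard : t.toFinset.card = m := by
    rw [← finrank_span_set_eq_card htli, htspan, hspan]
  obtain ⟨u, hut, hucard⟩ := Finset.exists_subset_card_eq (le_trans hk hcard.ge)
  have husub : (↑u : Set (Fin m → F)) ⊆ t := fun v hv => Set.mem_toFinset.mp (hut hv)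
  have huli : LinearIndependent F ((↑) : (↑u : Set (Fin m → F)) → (Fin m → F)) :=
    (show LinearIndepOn F id t from htli).mono husub
  have hchoice : ∀ v : {x // x ∈ u}, ∃ j : Fin n, Aᵀ j = (v : Fin m → F) :=
    fun v => hts (husub v.2)
  choose g hg using hchoice
  have ginj : Function.Injective g := by
    intro v1 v2 h
    apply Subtype.ext
    rw [← hg v1, ← hg v2, h]
  refine ⟨u.attach.image g, ?_, ?_⟩
  · rw [Finset.card_image_of_injective _ ginj, Finset.card_attach, hucard]
  · set S := u.attach.image g with hS
    have himg : Aᵀ '' (↑S : Set (Fin n)) = ↑u := by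
      ext w
      constructor
      · rintro ⟨j, hj, rfl⟩
        simp only [hS, Finset.coe_image, Set.mem_image, Finset.mem_coe,
          Finset.mem_attach] at hj
        obtain ⟨v, -, rfl⟩ := hj
        rw [hg v]
        exact v.2
      · intro hw
        exact ⟨g ⟨w, hw⟩, by simp [hS], hg _⟩
    have hcr : colRank A S = finrank F (span F (Aᵀ '' (↑S : Set (Fin n)))) := by
      have hr2 : Set.range (A.submatrix id (fun j : S => (j : Fin n))).col =
          Aᵀ '' (↑S : Set (Fin n)) := by
        rw [show (A.submatrix id (fun j : S => (j : Fin n))).col =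
          A.col ∘ ((↑) : S → Fin n) from rfl, Set.range_comp]
        congr 1
        ext x
        simp
      rw [colRank, Matrix.rank_eq_finrank_span_cols, hr2]
    rw [hcr, himg, finrank_span_set_eq_card huli, Finset.toFinset_coe, hucard]

variable [DecidableEq F]

lemma valid_key {n m ℓ ε : ℕ} (A : Matrix (Fin m) (Fin n) F)
    (H : Matrix (Fin ℓ) (Fin n) F)
    (D : (Fin ℓ → F) → (Fin m → F) → (Fin m → F)) (hD : IsValidScheme A H ε D)
    (V Z : Fin n → F) (hV : hammingNorm V ≤ 2 * ε)
    (hZ : A.mulVec Z = 0) (hHZ : H.mulVec (Z + V) = 0) :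
    A.mulVec V = 0 := by
  classical
  set T : Finset (Fin n) := Finset.univ.filter (fun i => V i ≠ 0) with hT
  have hTcard : T.card = hammingNorm V := rfl
  obtain ⟨T1, hT1T, hT1card⟩ := Finset.exists_subset_card_eq
    (min_le_right ε T.card)
  set E1 : Fin n → F := fun i => if i ∈ T1 then V i else 0 with hE1
  set E2 : Fin n → F := E1 - V with hE2
  have hnE1 : hammingNorm E1 ≤ ε := by
    have hsub : Finset.univ.filter (fun i => E1 i ≠ 0) ⊆ T1 := by
      intro i hi
      simp only [Finset.mem_filter, Finset.mem_univ, true_and] at hi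
      by_contra h
      simp [hE1, h] at hi
    calc hammingNorm E1 ≤ T1.card := Finset.card_le_card hsub
    _ ≤ ε := by rw [hT1card]; exact min_le_left _ _
  have hnE2 : hammingNorm E2 ≤ ε := by
    have hsub : Finset.univ.filter (fun i => E2 i ≠ 0) ⊆ T \ T1 := by
      intro i hi
      simp only [Finset.mem_filter, Finset.mem_univ, true_and] at hi
      rw [Finset.mem_sdiff]
      by_cases h1 : i ∈ T1
      · exfalso; apply hi; simp [hE2, hE1, h1]
      · refine ⟨?_, h1⟩
        simp only [hT, Finset.mem_filter, Finset.mem_univ, true_and]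
        intro hV0
        apply hi
        simp [hE2, hE1, h1, hV0]
    have hc : (T \ T1).card = T.card - min ε T.card := by
      rw [Finset.card_sdiff_of_subset hT1T, hT1card]
    have : hammingNorm E2 ≤ T.card - min ε T.card := by
      rw [← hc]; exact Finset.card_le_card hsub
    rw [hTcard] at this
    rcases le_total ε (hammingNorm V) with h | h
    · rw [min_eq_left h] at this; omega
    · rw [min_eq_right h] at this; omega
  have hVE : V = E1 - E2 := by rw [hE2, sub_sub_cancel]
  have h01 := hD 0 E1 hnE1
  have h02 := hD (-Z) E2 hnE2
  have hAX : A.mulVec (-Z) = A.mulVec 0 := by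
    simp [Matrix.mulVec_neg, hZ]
  have hHX : H.mulVec (0 + E1) = H.mulVec ((-Z) + E2) := by
    have hdiff : (0 + E1) - ((-Z) + E2) = Z + V := by
      rw [hVE, hE2]; abel
    have h' : H.mulVec ((0 + E1) - ((-Z) + E2)) = 0 := by rw [hdiff, hHZ]
    rw [mulVec_sub] at h'
    exact sub_eq_zero.mp h'
  rw [hHX, ← hAX] at h01
  have hkey : A.mulVec (0 + E1) = A.mulVec ((-Z) + E2) := by rw [← h01]; exact h02
  rw [zero_add] at hkey
  simp only [Matrix.mulVec_add, Matrix.mulVec_neg, hZ, neg_zero, zero_add] at hkey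
  rw [hVE, mulVec_sub, hkey, sub_self]

lemma eq_zero_of_colRank {m n : ℕ} (A : Matrix (Fin m) (Fin n) F) (S : Finset (Fin n))
    (hS : colRank A S = S.card) (V : Fin n → F) (hsupp : ∀ j, j ∉ S → V j = 0)
    (hAV : A.mulVec V = 0) : V = 0 := by
  classical
  set M := A.submatrix id (fun j : S => (j : Fin n)) with hM
  have hrank : M.rank = S.card := hS
  have hker : LinearMap.ker M.mulVecLin = ⊥ := by
    have h := LinearMap.finrank_range_add_finrank_ker M.mulVecLin
    rw [Module.finrank_pi, Fintype.card_coe] at h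
    have hr : finrank F (LinearMap.range M.mulVecLin) = M.rank := rfl
    have h0 : finrank F (LinearMap.ker M.mulVecLin) = 0 := by omega
    exact Submodule.finrank_eq_zero.mp h0
  have hMV : M.mulVecLin (fun j : S => V (j : Fin n)) = 0 := by
    funext i
    have hi := congrFun hAV i
    show (M *ᵥ fun j : S => V (j : Fin n)) i = 0
    have hsum : (M *ᵥ fun j : S => V (j : Fin n)) i = ∑ j : S, A i (j : Fin n) * V (j : Fin n) := rfl
    rw [hsum, Finset.sum_coe_sort S (fun j => A i j * V j)]
    rw [Finset.sum_subset (Finset.subset_univ S)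
      (fun x _ hx => by rw [hsupp x hx, mul_zero])]
    exact hi
  have hV0 : (fun j : S => V (j : Fin n)) = 0 := by
    have : (fun j : S => V (j : Fin n)) ∈ LinearMap.ker M.mulVecLin := hMV
    rwa [hker, Submodule.mem_bot] at this
  funext j
  by_cases hj : j ∈ S
  · exact congrFun hV0 ⟨j, hj⟩
  · exact hsupp j hj

lemma map_restrict_top {n m ℓ ε : ℕ} (A : Matrix (Fin m) (Fin n) F)
    (H : Matrix (Fin ℓ) (Fin n) F)
    (D : (Fin ℓ → F) → (Fin m → F) → (Fin m → F)) (hD : IsValidScheme A H ε D)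
    (S : Finset (Fin n)) (hcard : S.card = 2 * ε) (hfull : colRank A S = 2 * ε) :
    ((rowSpan H ⊓ rowSpan A).map (LinearMap.funLeft F F (fun j : S => (j : Fin n)))) = ⊤ := by
  classical
  set π := LinearMap.funLeft F F (fun j : S => (j : Fin n)) with hπ
  set U := (rowSpan H ⊓ rowSpan A).map π with hU
  have horth : (dotForm F S).orthogonal U = ⊥ := by
    rw [eq_bot_iff]
    intro w hw
    rw [Submodule.mem_bot]
    set V : Fin n → F := fun j => if h : j ∈ S then w ⟨j, h⟩ else 0 with hVdef
    have hVS : ∀ j, j ∉ S → V j = 0 := fun j hj => dif_neg hj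
    have hVw : ∀ j : S, V (j : Fin n) = w j := by
      rintro ⟨j, hj⟩
      simp only [hVdef, dif_pos hj]
    have hVorth : V ∈ (dotForm F (Fin n)).orthogonal (rowSpan H ⊓ rowSpan A) := by
      rw [LinearMap.BilinForm.mem_orthogonal_iff]
      intro c hc
      have hUc : π c ∈ U := Submodule.mem_map_of_mem hc
      have h0 := LinearMap.BilinForm.mem_orthogonal_iff.mp hw (π c) hUc
      rw [dotForm_apply] at h0 ⊢
      calc c ⬝ᵥ V = ∑ j ∈ S, c j * V j :=
            (Finset.sum_subset (Finset.subset_univ S)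
              (fun j _ hj => by rw [hVS j hj, mul_zero])).symm
        _ = ∑ j : S, c (j : Fin n) * V (j : Fin n) :=
            (Finset.sum_coe_sort S (fun j => c j * V j)).symm
        _ = ∑ j : S, π c j * w j := by
            refine Finset.sum_congr rfl fun j _ => ?_
            rw [hVw j]
            rfl
        _ = 0 := h0
    rw [orth_inf, orth_rowSpan, orth_rowSpan] at hVorth
    obtain ⟨u, hu, z, hz, huz⟩ := Submodule.mem_sup.mp hVorth
    rw [LinearMap.mem_ker, Matrix.mulVecLin_apply] at hu hz
    have hAV : A.mulVec V = 0 := by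
      apply valid_key A H D hD V (-z)
      · have hsub : Finset.univ.filter (fun i => V i ≠ 0) ⊆ S := by
          intro i hi
          simp only [Finset.mem_filter, Finset.mem_univ, true_and] at hi
          by_contra h
          exact hi (hVS i h)
        calc hammingNorm V ≤ S.card := Finset.card_le_card hsub
          _ ≤ 2 * ε := hcard.le
      · rw [Matrix.mulVec_neg, hz, neg_zero]
      · have : -z + V = u := by rw [← huz]; abel
        rw [this, hu]
    have hV0 : V = 0 := eq_zero_of_colRank A S (hfull.trans hcard.symm) V hVS hAV
    funext j
    rw [← hVw j, hV0]
    rfl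
  have hUU := congrArg ((dotForm F S).orthogonal) horth
  rw [LinearMap.BilinForm.orthogonal_orthogonal dotForm_nondeg dotForm_isRefl, orth_bot] at hUU
  exact hUU

lemma main_aux {n mA mB ℓ r ε : ℕ}
    (A : Matrix (Fin mA) (Fin n) F) (B : Matrix (Fin mB) (Fin n) F)
    (Ht : Matrix (Fin r) (Fin n) F) (hHt : rowSpan Ht = rowSpan A ⊓ rowSpan B)
    (H : Matrix (Fin ℓ) (Fin n) F)
    (D1 : (Fin ℓ → F) → (Fin mA → F) → (Fin mA → F))
    (D2 : (Fin ℓ → F) → (Fin mB → F) → (Fin mB → F))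
    (h1 : IsValidScheme A H ε D1) (h2 : IsValidScheme B H ε D2)
    (SA SB : Finset (Fin n)) (hSAc : SA.card = 2 * ε) (hSAr : colRank A SA = 2 * ε)
    (hSBc : SB.card = 2 * ε) (hSBr : colRank B SB = 2 * ε) :
    4 * ε - colRank Ht SA ≤ H.rank := by
  classical
  set π := LinearMap.funLeft F F (fun j : SA => (j : Fin n)) with hπ
  set XA := rowSpan H ⊓ rowSpan A with hXA
  set XB := rowSpan H ⊓ rowSpan B with hXB
  have hmapA : XA.map π = ⊤ := map_restrict_top A H D1 h1 SA hSAc hSAr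
  have hfinA : finrank F (XA.map π) = 2 * ε := by
    rw [hmapA, finrank_top, Module.finrank_pi, Fintype.card_coe, hSAc]
  have hrnA := finrank_map_add_finrank_inf_ker π XA
  have hrnY := finrank_map_add_finrank_inf_ker π (XA ⊓ XB)
  have hYth : finrank F ((XA ⊓ XB).map π) ≤ colRank Ht SA := by
    rw [colRank_eq Ht SA]
    apply Submodule.finrank_mono
    apply Submodule.map_mono
    rw [hHt]
    exact le_inf (inf_le_left.trans inf_le_right) (inf_le_right.trans inf_le_right)
  have hYker : finrank F (XA ⊓ XB ⊓ LinearMap.ker π : Submodule F (Fin n → F)) ≤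
      finrank F (XA ⊓ LinearMap.ker π : Submodule F (Fin n → F)) :=
    Submodule.finrank_mono (inf_le_inf_right _ inf_le_left)
  have hXBge : 2 * ε ≤ finrank F XB := by
    have hmapB : XB.map (LinearMap.funLeft F F (fun j : SB => (j : Fin n))) = ⊤ :=
      map_restrict_top B H D2 h2 SB hSBc hSBr
    have hle := Submodule.finrank_map_le
      (LinearMap.funLeft F F (fun j : SB => (j : Fin n))) XB
    rw [hmapB, finrank_top, Module.finrank_pi, Fintype.card_coe, hSBc] at hle
    exact hle
  have hsup := Submodule.finrank_sup_add_finrank_inf_eq XA XB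
  have hsuple : finrank F (XA ⊔ XB : Submodule F (Fin n → F)) ≤ finrank F (rowSpan H) :=
    Submodule.finrank_mono (sup_le inf_le_left inf_le_left)
  have hH : H.rank = finrank F (rowSpan H) := rank_eq_rowSpan H
  omega


end BroadcastAux

/-- broadcast converse for the general case: with
`θ_A = min { rank(H̃|_S) : S a 2ε-core of C_A⊥ }` (a `2ε`-core being a set `S` of size
`2ε` with `rank(A|_S) = 2ε`), `θ_B` defined analogously, and `θ = min(θ_A, θ_B)`,
every valid broadcast scheme has cost `rank H ≥ 4ε - θ`. -/
theorem broadcast_general_bound {F : Type*} [Field F] [Fintype F] [DecidableEq F]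
    {n mA mB ℓ r ε : ℕ} (hmA : mA ≤ n) (hmB : mB ≤ n)
    (hεA : 2 * ε < mA) (hεB : 2 * ε < mB)
    (A : Matrix (Fin mA) (Fin n) F) (hA : A.rank = mA)
    (B : Matrix (Fin mB) (Fin n) F) (hB : B.rank = mB)
    (Ht : Matrix (Fin r) (Fin n) F) (hHt : rowSpan Ht = rowSpan A ⊓ rowSpan B)
    (H : Matrix (Fin ℓ) (Fin n) F)
    (D1 : (Fin ℓ → F) → (Fin mA → F) → (Fin mA → F))
    (D2 : (Fin ℓ → F) → (Fin mB → F) → (Fin mB → F))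
    (h1 : IsValidScheme A H ε D1) (h2 : IsValidScheme B H ε D2)
    (θA θB θ : ℕ)
    (hθA : θA = sInf {x | ∃ S : Finset (Fin n), S.card = 2 * ε ∧
      colRank A S = 2 * ε ∧ colRank Ht S = x})
    (hθB : θB = sInf {x | ∃ S : Finset (Fin n), S.card = 2 * ε ∧
      colRank B S = 2 * ε ∧ colRank Ht S = x})
    (hθ : θ = min θA θB) :
    4 * ε - θ ≤ H.rank := by
  classical
  obtain ⟨SA0, hSA0c, hSA0r⟩ := BroadcastAux.exists_core A hA hεA.le
  obtain ⟨SB0, hSB0c, hSB0r⟩ := BroadcastAux.exists_core B hB hεB.le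
  have hneA : {x | ∃ S : Finset (Fin n), S.card = 2 * ε ∧
      colRank A S = 2 * ε ∧ colRank Ht S = x}.Nonempty :=
    ⟨colRank Ht SA0, SA0, hSA0c, hSA0r, rfl⟩
  have hneB : {x | ∃ S : Finset (Fin n), S.card = 2 * ε ∧
      colRank B S = 2 * ε ∧ colRank Ht S = x}.Nonempty :=
    ⟨colRank Ht SB0, SB0, hSB0c, hSB0r, rfl⟩
  obtain ⟨SA, hSAc, hSAr, hSAt⟩ := hθA ▸ Nat.sInf_mem hneA
  obtain ⟨SB, hSBc, hSBr, hSBt⟩ := hθB ▸ Nat.sInf_mem hneB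
  have bA : 4 * ε - θA ≤ H.rank := by
    rw [← hSAt]
    exact BroadcastAux.main_aux A B Ht hHt H D1 D2 h1 h2 SA SB hSAc hSAr hSBc hSBr
  have bB : 4 * ε - θB ≤ H.rank := by
    rw [← hSBt]
    exact BroadcastAux.main_aux B A Ht (by rw [hHt, inf_comm]) H D2 D1 h2 h1
      SB SA hSBc hSBr hSAc hSAr
  omega
end
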